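/- Let A be a d×d real symmetric positive semidefinite matrix, let s ∈ {1,…,d}, let ε ∈ (0,1), and let N be a finite subset of S₀^{d−1}(s) such that for every v ∈ S₀^{d−1}(s) there exists u ∈ N with ‖v − u‖₂ ≤ ε and ‖v − u‖₀ ≤ s. Then φ_min(s;A) ≥ min_{u∈N} uᵀAu − 3ε·φ_max(s;A). -/

import Mathlib

open Real Matrix

/-- Number of nonzero coordinates (ℓ₀ "norm"). -/
noncomputable def l0norm {d : ℕ} (v : Fin d → ℝ) : ℕ := {j | v j ≠ 0}.ncard

/-- Euclidean (ℓ₂) norm. -/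
noncomputable def l2norm {d : ℕ} (v : Fin d → ℝ) : ℝ := Real.sqrt (∑ j, (v j) ^ 2)

/-- Quadratic form vᵀ A v. -/
noncomputable def quadForm {d : ℕ} (A : Matrix (Fin d) (Fin d) ℝ) (v : Fin d → ℝ) : ℝ :=
  dotProduct v (A.mulVec v)

/-- Minimum sparse eigenvalue φ_min(s; A). -/
noncomputable def phiMin {d : ℕ} (s : ℕ) (A : Matrix (Fin d) (Fin d) ℝ) : ℝ :=
  sInf ((fun v => quadForm A v / (l2norm v) ^ 2) '' {v : Fin d → ℝ | v ≠ 0 ∧ l0norm v ≤ s})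

/-- Maximum sparse eigenvalue φ_max(s; A). -/
noncomputable def phiMax {d : ℕ} (s : ℕ) (A : Matrix (Fin d) (Fin d) ℝ) : ℝ :=
  sSup ((fun v => quadForm A v / (l2norm v) ^ 2) '' {v : Fin d → ℝ | v ≠ 0 ∧ l0norm v ≤ s})

/-- The sparse unit sphere S₀^{d-1}(s). -/
def sparseSphere (d s : ℕ) : Set (Fin d → ℝ) := {v | l2norm v = 1 ∧ l0norm v ≤ s}

/- ## Auxiliary lemmas -/

lemma l2norm_nonneg {d : ℕ} (v : Fin d → ℝ) : 0 ≤ l2norm v := Real.sqrt_nonneg _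

lemma l2norm_sq {d : ℕ} (v : Fin d → ℝ) : (l2norm v) ^ 2 = ∑ j, (v j) ^ 2 :=
  Real.sq_sqrt (Finset.sum_nonneg fun _ _ => sq_nonneg _)

lemma l2norm_pos {d : ℕ} {v : Fin d → ℝ} (hv : v ≠ 0) : 0 < l2norm v := by
  rcases (l2norm_nonneg v).lt_or_eq with h | h
  · exact h
  · exfalso
    apply hv
    have hsum : ∑ j, (v j) ^ 2 = 0 := by
      have := l2norm_sq v
      rw [← h] at this
      simpa using this.symm
    funext j
    have := (Finset.sum_eq_zero_iff_of_nonneg (fun i _ => sq_nonneg (v i))).1 hsum j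
      (Finset.mem_univ j)
    exact pow_eq_zero_iff (n := 2) (by norm_num) |>.1 this

lemma abs_le_l2norm {d : ℕ} (v : Fin d → ℝ) (j : Fin d) : |v j| ≤ l2norm v := by
  rw [← Real.sqrt_sq_eq_abs]
  apply Real.sqrt_le_sqrt
  exact Finset.single_le_sum (f := fun i => (v i) ^ 2) (fun i _ => sq_nonneg _)
    (Finset.mem_univ j)

lemma l2norm_smul {d : ℕ} (c : ℝ) (v : Fin d → ℝ) : l2norm (c • v) = |c| * l2norm v := by
  unfold l2norm
  rw [← Real.sqrt_sq_eq_abs, ← Real.sqrt_mul (sq_nonneg c), Finset.mul_sum]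
  congr 1
  apply Finset.sum_congr rfl
  intro j _
  simp [Pi.smul_apply, mul_pow]

lemma l0norm_smul_le {d : ℕ} (c : ℝ) (v : Fin d → ℝ) : l0norm (c • v) ≤ l0norm v := by
  unfold l0norm
  apply Set.ncard_le_ncard _ (Set.toFinite _)
  intro j hj
  simp only [Set.mem_setOf_eq, Pi.smul_apply, smul_eq_mul] at hj ⊢
  intro h
  exact hj (by rw [h, mul_zero])

lemma quadForm_smul {d : ℕ} (A : Matrix (Fin d) (Fin d) ℝ) (c : ℝ) (v : Fin d → ℝ) :
    quadForm A (c • v) = c ^ 2 * quadForm A v := by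
  unfold quadForm
  rw [Matrix.mulVec_smul, dotProduct_smul, smul_dotProduct]
  simp [smul_smul, sq, mul_assoc]

lemma quadForm_nonneg {d : ℕ} {A : Matrix (Fin d) (Fin d) ℝ} (hA : A.PosSemidef)
    (v : Fin d → ℝ) : 0 ≤ quadForm A v := by
  have := hA.dotProduct_mulVec_nonneg v
  simpa [quadForm] using this

lemma dot_symm {d : ℕ} {A : Matrix (Fin d) (Fin d) ℝ} (hA : Aᵀ = A) (u w : Fin d → ℝ) :
    dotProduct u (A.mulVec w) = dotProduct w (A.mulVec u) := by
  rw [Matrix.dotProduct_mulVec, ← Matrix.mulVec_transpose, hA, dotProduct_comm]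

lemma quadForm_add {d : ℕ} {A : Matrix (Fin d) (Fin d) ℝ} (hA : Aᵀ = A) (u w : Fin d → ℝ) :
    quadForm A (u + w) = quadForm A u + 2 * dotProduct u (A.mulVec w) + quadForm A w := by
  unfold quadForm
  rw [Matrix.mulVec_add, add_dotProduct, dotProduct_add,
    dotProduct_add, dot_symm hA w u]
  ring

open scoped MatrixOrder in
/-- Cauchy–Schwarz for a PSD quadratic form. -/
lemma psd_cauchy_schwarz {d : ℕ} {A : Matrix (Fin d) (Fin d) ℝ} (hA : A.PosSemidef)
    (u w : Fin d → ℝ) :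
    |dotProduct u (A.mulVec w)| ≤ Real.sqrt (quadForm A u) * Real.sqrt (quadForm A w) := by
  set B := CFC.sqrt A with hBdef
  have hBB : B * B = A := CFC.sqrt_mul_sqrt_self A hA.nonneg
  have hBsym : Bᵀ = B := by
    have := (CFC.sqrt_nonneg A).posSemidef.isHermitian
    simpa [Matrix.IsHermitian, Matrix.conjTranspose_eq_transpose_of_trivial] using this
  have key : ∀ x y : Fin d → ℝ,
      dotProduct x (A.mulVec y) = ∑ i, B.mulVec x i * B.mulVec y i := by
    intro x y
    rw [← hBB, ← Matrix.mulVec_mulVec, Matrix.dotProduct_mulVec, ← Matrix.mulVec_transpose,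
      hBsym]
    rfl
  have hqu : quadForm A u = ∑ i, (B.mulVec u i) ^ 2 := by
    simpa [sq, quadForm] using key u u
  have hqw : quadForm A w = ∑ i, (B.mulVec w i) ^ 2 := by
    simpa [sq, quadForm] using key w w
  rw [key u w, hqu, hqw, ← Real.sqrt_mul (Finset.sum_nonneg fun _ _ => sq_nonneg _),
    ← Real.sqrt_sq_eq_abs]
  exact Real.sqrt_le_sqrt (Finset.sum_mul_sq_le_sq_mul_sq Finset.univ _ _)

lemma quadForm_le_bound {d : ℕ} (A : Matrix (Fin d) (Fin d) ℝ) (v : Fin d → ℝ) :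
    quadForm A v ≤ (∑ i, ∑ j, |A i j|) * (l2norm v) ^ 2 := by
  have h1 : quadForm A v = ∑ i, ∑ j, v i * (A i j * v j) := by
    unfold quadForm dotProduct Matrix.mulVec
    simp [dotProduct, Finset.mul_sum]
  rw [h1, Finset.sum_mul]
  apply Finset.sum_le_sum
  intro i _
  rw [Finset.sum_mul]
  apply Finset.sum_le_sum
  intro j _
  calc v i * (A i j * v j) ≤ |v i * (A i j * v j)| := le_abs_self _
    _ = |A i j| * (|v i| * |v j|) := by rw [abs_mul, abs_mul]; ring
    _ ≤ |A i j| * (l2norm v * l2norm v) := by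
        apply mul_le_mul_of_nonneg_left _ (abs_nonneg _)
        exact mul_le_mul (abs_le_l2norm v i) (abs_le_l2norm v j) (abs_nonneg _)
          (l2norm_nonneg v)
    _ = |A i j| * (l2norm v) ^ 2 := by ring

lemma phi_bddAbove {d : ℕ} (s : ℕ) (A : Matrix (Fin d) (Fin d) ℝ) :
    BddAbove ((fun v => quadForm A v / (l2norm v) ^ 2) ''
      {v : Fin d → ℝ | v ≠ 0 ∧ l0norm v ≤ s}) := by
  refine ⟨∑ i, ∑ j, |A i j|, ?_⟩
  rintro x ⟨v, ⟨hv0, _⟩, rfl⟩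
  have hL : 0 < (l2norm v) ^ 2 := pow_pos (l2norm_pos hv0) 2
  rw [div_le_iff₀ hL]
  exact quadForm_le_bound A v

lemma quadForm_le_phiMax {d : ℕ} {s : ℕ} {A : Matrix (Fin d) (Fin d) ℝ}
    {v : Fin d → ℝ} (hv0 : v ≠ 0) (hvs : l0norm v ≤ s) :
    quadForm A v ≤ phiMax s A * (l2norm v) ^ 2 := by
  have hL : 0 < (l2norm v) ^ 2 := pow_pos (l2norm_pos hv0) 2
  have hmem : quadForm A v / (l2norm v) ^ 2 ∈
      ((fun v => quadForm A v / (l2norm v) ^ 2) ''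
        {v : Fin d → ℝ | v ≠ 0 ∧ l0norm v ≤ s}) := ⟨v, ⟨hv0, hvs⟩, rfl⟩
  have := le_csSup (phi_bddAbove s A) hmem
  rw [div_le_iff₀ hL] at this
  exact this

/-- minimum sparse eigenvalue is controlled from below on a greedy ε-net. -/
theorem min_sparse_eigen_on_net {d : ℕ} (s : ℕ) (hs1 : 1 ≤ s) (hsd : s ≤ d)
    (A : Matrix (Fin d) (Fin d) ℝ) (hA : A.PosSemidef)
    (ε : ℝ) (hε0 : 0 < ε) (hε1 : ε < 1)
    (N : Finset (Fin d → ℝ)) (hNsub : ↑N ⊆ sparseSphere d s)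
    (hnet : ∀ v ∈ sparseSphere d s, ∃ u ∈ N, l2norm (v - u) ≤ ε ∧ l0norm (v - u) ≤ s) :
    sInf ((fun u => quadForm A u) '' ↑N) - 3 * ε * phiMax s A ≤ phiMin s A := by
  classical
  have hd : 0 < d := lt_of_lt_of_le (by omega : 0 < s) hsd
  have hAsym : Aᵀ = A := by
    have := hA.isHermitian
    simpa [Matrix.IsHermitian, Matrix.conjTranspose_eq_transpose_of_trivial] using this
  -- the canonical sparse unit vector
  set e : Fin d → ℝ := Pi.single ⟨0, hd⟩ 1 with he_def
  have he0 : e ≠ 0 := by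
    intro h
    have : e ⟨0, hd⟩ = 0 := by rw [h]; rfl
    simp [he_def] at this
  have hel0 : l0norm e ≤ s := by
    have : {j | e j ≠ 0} ⊆ {(⟨0, hd⟩ : Fin d)} := by
      intro j hj
      simp only [Set.mem_setOf_eq, he_def] at hj
      by_contra hne
      simp only [Set.mem_singleton_iff] at hne
      exact hj (Pi.single_eq_of_ne hne 1)
    calc l0norm e ≤ ({(⟨0, hd⟩ : Fin d)} : Set (Fin d)).ncard :=
          Set.ncard_le_ncard this (Set.toFinite _)
      _ = 1 := Set.ncard_singleton _
      _ ≤ s := hs1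
  -- nonemptiness of the φ_min set
  have hne : ((fun v => quadForm A v / (l2norm v) ^ 2) ''
      {v : Fin d → ℝ | v ≠ 0 ∧ l0norm v ≤ s}).Nonempty := ⟨_, ⟨e, ⟨he0, hel0⟩, rfl⟩⟩
  -- φ_max is nonnegative
  have hphimax0 : 0 ≤ phiMax s A := by
    have h1 := quadForm_nonneg hA e
    have h2 := quadForm_le_phiMax (A := A) (s := s) he0 hel0
    nlinarith [pow_pos (l2norm_pos he0) 2, quadForm_le_phiMax (A := A) (s := s) he0 hel0]
  refine le_csInf hne ?_
  rintro b ⟨v, ⟨hv0, hvs⟩, rfl⟩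
  set c := l2norm v with hc
  have hc0 : 0 < c := l2norm_pos hv0
  set v' : Fin d → ℝ := c⁻¹ • v with hv'def
  have hquad : quadForm A v / c ^ 2 = quadForm A v' := by
    rw [hv'def, quadForm_smul]
    field_simp
  have hv'sph : v' ∈ sparseSphere d s := by
    constructor
    · rw [hv'def, l2norm_smul, abs_of_pos (inv_pos.2 hc0), ← hc, inv_mul_cancel₀ hc0.ne']
    · exact le_trans (l0norm_smul_le _ _) hvs
  obtain ⟨u, huN, hweps, hws⟩ := hnet v' hv'sph
  set w : Fin d → ℝ := v' - u with hwdef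
  have husph : u ∈ sparseSphere d s := hNsub huN
  have hu0 : u ≠ 0 := by
    intro h
    have := husph.1
    rw [h] at this
    simp [l2norm] at this
  have huq : quadForm A u ≤ phiMax s A := by
    have := quadForm_le_phiMax (A := A) (s := s) hu0 husph.2
    rwa [husph.1, one_pow, mul_one] at this
  -- bound on quadForm A w
  have hqw : quadForm A w ≤ phiMax s A * ε ^ 2 := by
    by_cases hw0 : w = 0
    · rw [hw0]
      simp [quadForm]
      positivity
    · calc quadForm A w ≤ phiMax s A * (l2norm w) ^ 2 :=
            quadForm_le_phiMax (A := A) (s := s) hw0 hws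
        _ ≤ phiMax s A * ε ^ 2 := by
            apply mul_le_mul_of_nonneg_left _ hphimax0
            exact pow_le_pow_left₀ (l2norm_nonneg w) hweps 2
  -- cross term bound
  have hcross : |dotProduct u (A.mulVec w)| ≤ ε * phiMax s A := by
    calc |dotProduct u (A.mulVec w)|
        ≤ Real.sqrt (quadForm A u) * Real.sqrt (quadForm A w) := psd_cauchy_schwarz hA u w
      _ ≤ Real.sqrt (phiMax s A) * Real.sqrt (phiMax s A * ε ^ 2) := by
          apply mul_le_mul (Real.sqrt_le_sqrt huq) (Real.sqrt_le_sqrt hqw)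
            (Real.sqrt_nonneg _) (Real.sqrt_nonneg _)
      _ = ε * phiMax s A := by
          rw [Real.sqrt_mul hphimax0, Real.sqrt_sq hε0.le, ← mul_assoc,
            Real.mul_self_sqrt hphimax0]
          ring
  -- expansion
  have hv'uw : v' = u + w := by rw [hwdef]; abel
  have hexp : quadForm A v' = quadForm A u + 2 * dotProduct u (A.mulVec w)
      + quadForm A w := by rw [hv'uw, quadForm_add hAsym]
  -- sInf over N
  have hinf : sInf ((fun u => quadForm A u) '' ↑N) ≤ quadForm A u := by
    apply csInf_le ((N.finite_toSet.image _).bddBelow)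
    exact ⟨u, huN, rfl⟩
  have hcross' := abs_le.1 hcross
  have hqw0 : 0 ≤ quadForm A w := quadForm_nonneg hA w
  have hεφ : 0 ≤ ε * phiMax s A := mul_nonneg hε0.le hphimax0
  have hb : (fun v => quadForm A v / l2norm v ^ 2) v = quadForm A v' := by
    simpa [← hc] using hquad
  rw [hb, hexp]
  nlinarith [hcross'.1, hinf, hqw0, hεφ]
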